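/- Let 𝔤₂₅ = 𝔥₃ × ℝ³ with single nonzero bracket [e₁,e₂] = e₃, ω = e¹∧e³ + e²∧e⁴ + e⁵∧e⁶, and J given by J(e₁)=e₂, J(e₂)=−e₁, J(e₃)=e₄, J(e₄)=−e₃, J(e₅)=e₆, J(e₆)=−e₅. Then (J,ω) is a pseudo-Kähler structure and the associated metric g = ω∘J is flat: the curvature tensor of its Levi-Civita connection vanishes identically. -/
import Mathlib


noncomputable section

/-- The underlying space ℝ⁶ of 𝔤₂₅ = 𝔥₃ × ℝ³. -/
abbrev V25 : Type := Fin 6 → ℝ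

/-- Bracket of 𝔤₂₅: [e₁,e₂] = e₃. -/
def br25 (X Y : V25) : V25 :=
  ![0, 0, X 0 * Y 1 - X 1 * Y 0, 0, 0, 0]

/-- ω = e¹∧e³ + e²∧e⁴ + e⁵∧e⁶. -/
def om25 (X Y : V25) : ℝ :=
  (X 0 * Y 2 - X 2 * Y 0) + (X 1 * Y 3 - X 3 * Y 1) + (X 4 * Y 5 - X 5 * Y 4)

/-- J(e₁)=e₂, J(e₂)=−e₁, J(e₃)=e₄, J(e₄)=−e₃, J(e₅)=e₆, J(e₆)=−e₅. -/
def J25 (X : V25) : V25 :=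
  ![-X 1, X 0, -X 3, X 2, -X 5, X 4]

/-- Associated metric g(X,Y) = ω(X, JY). -/
def g25 (X Y : V25) : ℝ := om25 X (J25 Y)

@[simp] lemma vec6_four {α : Type*} (a b c d e f : α) : ![a,b,c,d,e,f] 4 = e := rfl
@[simp] lemma vec6_five {α : Type*} (a b c d e f : α) : ![a,b,c,d,e,f] 5 = f := rfl

/-- (J,ω) is a pseudo-Kähler structure on 𝔤₂₅ = 𝔥₃ × ℝ³ and the
associated metric g = ω∘J is flat: the curvature tensor vanishes identically. -/
theorem g25_pseudoKaehler_flat :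
    (∀ X Y Z : V25,
      om25 (br25 X Y) Z - om25 (br25 X Z) Y + om25 (br25 Y Z) X = 0) ∧
    (∀ X : V25, (∀ Y : V25, om25 X Y = 0) → X = 0) ∧
    (∀ X : V25, J25 (J25 X) = -X) ∧
    (∀ X Y : V25,
      br25 (J25 X) (J25 Y) - br25 X Y
        - J25 (br25 (J25 X) Y) - J25 (br25 X (J25 Y)) = 0) ∧
    (∀ X Y : V25, om25 (J25 X) (J25 Y) = om25 X Y) ∧
    (∀ (nabla : V25 → V25 → V25),
      (∀ X Y Z : V25,
        2 * g25 (nabla X Y) Z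
          = g25 (br25 X Y) Z + g25 (br25 Z X) Y + g25 X (br25 Z Y)) →
      ∀ X Y Z : V25,
        nabla X (nabla Y Z) - nabla Y (nabla X Z) - nabla (br25 X Y) Z = 0) := by

  refine ⟨?_, ?_, ?_, ?_, ?_, ?_⟩
  · intro X Y Z; simp [om25, br25]; ring
  · intro X hX
    funext i
    fin_cases i
    · have := hX ![0,0,-1,0,0,0]; simp [om25] at this; simpa using this
    · have := hX ![0,0,0,-1,0,0]; simp [om25] at this; simpa using this
    · have := hX ![1,0,0,0,0,0]; simp [om25] at this; simpa using by linarith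
    · have := hX ![0,1,0,0,0,0]; simp [om25] at this; simpa using by linarith
    · have := hX ![0,0,0,0,0,-1]; simp [om25] at this; simpa using this
    · have := hX ![0,0,0,0,1,0]; simp [om25] at this; simpa using this
  · intro X; funext i; fin_cases i <;> simp [J25]
  · intro X Y; funext i; fin_cases i <;> simp [br25, J25] <;> ring
  · intro X Y; simp [om25, J25]; ring
  · intro nabla h
    have key : ∀ X Y : V25, nabla X Y = ![0, 0, -(X 1 * Y 0), -(X 1 * Y 1), 0, 0] := by
      intro X Y
      have h0 := h X Y ![0,0,0,-1,0,0]
      have h1 := h X Y ![0,0,1,0,0,0]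
      have h2 := h X Y ![0,1,0,0,0,0]
      have h3 := h X Y ![(-1 : ℝ),0,0,0,0,0]
      have h4 := h X Y ![0,0,0,0,1,0]
      have h5 := h X Y ![0,0,0,0,0,1]
      simp [g25, om25, J25, br25] at h0 h1 h2 h3 h4 h5
      funext i
      fin_cases i <;> simp <;> linarith
    intro X Y Z
    rw [key Y Z, key X Z, key X, key Y, key]
    funext i
    fin_cases i <;> simp [br25]
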